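/- Let s, κ, λ ∈ ℝ. The hermitian 4×4 matrix [[s, 1, κλ, 0],[1, s, 0, κλ],[κλ, 0, −s, −1],[0, κλ, −1, −s]] has spectrum equal to the set { √((1+s)² + κ²λ²), −√((1+s)² + κ²λ²), √((1−s)² + κ²λ²), −√((1−s)² + κ²λ²) }. -/

import Mathlib

theorem spectrum_basic_localizer (s κ lam : ℝ) :
    spectrum ℂ
        (!![(s : ℂ), 1, (κ * lam : ℝ), 0;
            1, (s : ℂ), 0, (κ * lam : ℝ);
            (κ * lam : ℝ), 0, (-s : ℝ), -1;
            0, (κ * lam : ℝ), -1, (-s : ℝ)] : Matrix (Fin 4) (Fin 4) ℂ)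
      = {(Real.sqrt ((1 + s) ^ 2 + κ ^ 2 * lam ^ 2) : ℂ),
          (-Real.sqrt ((1 + s) ^ 2 + κ ^ 2 * lam ^ 2) : ℂ),
          (Real.sqrt ((1 - s) ^ 2 + κ ^ 2 * lam ^ 2) : ℂ),
          (-Real.sqrt ((1 - s) ^ 2 + κ ^ 2 * lam ^ 2) : ℂ)} := by
  set M : Matrix (Fin 4) (Fin 4) ℂ :=
    !![(s : ℂ), 1, (κ * lam : ℝ), 0;
       1, (s : ℂ), 0, (κ * lam : ℝ);
       (κ * lam : ℝ), 0, (-s : ℝ), -1;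
       0, (κ * lam : ℝ), -1, (-s : ℝ)] with hM
  set a : ℝ := Real.sqrt ((1 + s) ^ 2 + κ ^ 2 * lam ^ 2) with haa
  set b : ℝ := Real.sqrt ((1 - s) ^ 2 + κ ^ 2 * lam ^ 2) with hbb
  have ha : (a : ℂ) ^ 2 = (1 + (s:ℂ)) ^ 2 + ((κ:ℂ) * lam) ^ 2 := by
    have h := Real.sq_sqrt (by positivity : (0:ℝ) ≤ (1 + s) ^ 2 + κ ^ 2 * lam ^ 2)
    rw [haa, ← Complex.ofReal_pow, h]
    push_cast
    ring
  have hb : (b : ℂ) ^ 2 = (1 - (s:ℂ)) ^ 2 + ((κ:ℂ) * lam) ^ 2 := by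
    have h := Real.sq_sqrt (by positivity : (0:ℝ) ≤ (1 - s) ^ 2 + κ ^ 2 * lam ^ 2)
    rw [hbb, ← Complex.ofReal_pow, h]
    push_cast
    ring
  ext μ
  have hmem : μ ∈ spectrum ℂ M ↔ (Matrix.diagonal (fun _ => μ) - M).det = 0 := by
    rw [spectrum.mem_iff, Matrix.isUnit_iff_isUnit_det, isUnit_iff_ne_zero, not_ne_iff,
      Matrix.algebraMap_eq_diagonal]
    rfl
  have hD : Matrix.diagonal (fun _ : Fin 4 => μ) - M =
      !![μ - s, -1, -((κ:ℂ) * lam), 0;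
         -1, μ - s, 0, -((κ:ℂ) * lam);
         -((κ:ℂ) * lam), 0, μ + s, 1;
         0, -((κ:ℂ) * lam), 1, μ + s] := by
    ext i j
    fin_cases i <;> fin_cases j <;>
      simp [Matrix.diagonal, hM]
  have hdet : (Matrix.diagonal (fun _ => μ) - M).det
      = (μ - a) * (μ + a) * ((μ - b) * (μ + b)) := by
    have h2 : (μ - (a:ℂ)) * (μ + a) * ((μ - b) * (μ + b))
        = (μ ^ 2 - (a:ℂ)^2) * (μ ^ 2 - (b:ℂ)^2) := by ring
    rw [h2, ha, hb, hD]
    simp [Matrix.det_succ_row_zero, Fin.sum_univ_succ, Fin.succAbove]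
    ring
  rw [Set.mem_insert_iff, Set.mem_insert_iff, Set.mem_insert_iff, Set.mem_singleton_iff,
    hmem, hdet]
  simp only [mul_eq_zero, sub_eq_zero, add_eq_zero_iff_eq_neg]
  tauto
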